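/- Let (⋯ → G₂ → G₁ → G₀) be an inverse sequence of pointed sets that either is an inverse sequence of groups and group homomorphisms or has every Gᵢ finite. If the inverse limit lim Gᵢ is discrete in the inverse limit topology (each Gᵢ carrying the discrete topology), then the projection lim Gᵢ → G_k is injective for some k. -/
import Mathlib


/-- An inverse sequence of pointed sets `⋯ → X₂ → X₁ → X₀`, presented by its
compatible composite basepoint-preserving bonding maps `bond h : X j → X i` for
`i ≤ j`; the one-step bonding maps are `bond (Nat.le_succ i) : X (i+1) → X i`. -/
structure PointedInvSeq (X : ℕ → Type) (pt : ∀ i, X i) : Type where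
  bond : ∀ ⦃i j : ℕ⦄, i ≤ j → X j → X i
  bond_refl : ∀ i (x : X i), bond (le_refl i) x = x
  bond_comp : ∀ ⦃i j k : ℕ⦄ (hij : i ≤ j) (hjk : j ≤ k) (x : X k),
    bond (hij.trans hjk) x = bond hij (bond hjk x)
  bond_pt : ∀ ⦃i j : ℕ⦄ (h : i ≤ j), bond h (pt j) = pt i

/-- If an inverse sequence of pointed sets either consists of groups and group
homomorphisms or has all terms finite, and its inverse limit (topologized as a
subspace of the product of the discrete spaces `Xᵢ`) is discrete, then the
projection of the inverse limit to `X k` is injective for some `k`. -/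
theorem lim_injects_of_discrete
    {X : ℕ → Type} (pt : ∀ i, X i) (S : PointedInvSeq X pt)
    [∀ i, TopologicalSpace (X i)] [∀ i, DiscreteTopology (X i)]
    (hcase : (∀ i, Finite (X i)) ∨
      ∃ grp : ∀ i, Group (X i),
        (∀ i, pt i = (letI := grp i; (1 : X i))) ∧
        ∀ ⦃i j : ℕ⦄ (h : i ≤ j) (x y : X j),
          S.bond h (letI := grp j; x * y) =
            (letI := grp i; S.bond h x * S.bond h y))
    (hdisc : DiscreteTopology
      {g : ∀ i, X i // ∀ i, S.bond (Nat.le_succ i) (g (i + 1)) = g i}) :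
    ∃ k, Function.Injective
      (fun g : {g : ∀ i, X i // ∀ i, S.bond (Nat.le_succ i) (g (i + 1)) = g i} =>
        g.1 k) := by
  classical
  set L := {g : ∀ i, X i // ∀ i, S.bond (Nat.le_succ i) (g (i + 1)) = g i} with hL
  -- coherence: a thread is determined below an index
  have coh : ∀ (g : L) ⦃i j : ℕ⦄ (h : i ≤ j), S.bond h (g.1 j) = g.1 i := by
    intro g i j h
    induction j, h using Nat.le_induction with
    | base => exact S.bond_refl i _
    | succ j hij ih =>
      have h1 : S.bond (hij.trans (Nat.le_succ j)) (g.1 (j+1))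
          = S.bond hij (S.bond (Nat.le_succ j) (g.1 (j+1))) :=
        S.bond_comp hij (Nat.le_succ j) (g.1 (j+1))
      rw [g.2 j, ih] at h1
      exact h1
  rcases hcase with hfin | ⟨grp, hpt, hmul⟩
  · -- finite case: L is compact and discrete, hence finite
    haveI : ∀ i, Finite (X i) := hfin
    have hclosed : IsClosed {g : ∀ i, X i | ∀ i, S.bond (Nat.le_succ i) (g (i+1)) = g i} := by
      have : {g : ∀ i, X i | ∀ i, S.bond (Nat.le_succ i) (g (i+1)) = g i}
          = ⋂ i, {g : ∀ i, X i | S.bond (Nat.le_succ i) (g (i+1)) = g i} := by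
        ext g; simp [Set.mem_iInter]
      rw [this]
      refine isClosed_iInter fun i => isClosed_eq ?_ (continuous_apply i)
      exact continuous_of_discreteTopology.comp (continuous_apply (i+1))
    haveI : CompactSpace L := isCompact_iff_compactSpace.mp hclosed.isCompact
    haveI : Finite L := finite_of_compact_of_discrete
    haveI : Fintype L := Fintype.ofFinite L
    have hdif : ∀ g h : L, g ≠ h → ∃ n, g.1 n ≠ h.1 n := by
      intro g h hgh
      by_contra hc
      push_neg at hc
      exact hgh (Subtype.ext (funext hc))
    let f : L × L → ℕ := fun p => if hp : p.1 = p.2 then 0 else (hdif p.1 p.2 hp).choose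
    refine ⟨Finset.univ.sup f, ?_⟩
    intro g h hgh
    by_contra hne
    have hn : g.1 ((hdif g h hne).choose) ≠ h.1 ((hdif g h hne).choose) :=
      (hdif g h hne).choose_spec
    have hle : (hdif g h hne).choose ≤ Finset.univ.sup f := by
      have : f (g, h) ≤ Finset.univ.sup f := Finset.le_sup (Finset.mem_univ _)
      simpa [f, hne] using this
    apply hn
    rw [← coh g hle, ← coh h hle]
    simp only at hgh
    rw [hgh]
  · -- group case
    letI := grp
    have hpt' : ∀ i, pt i = 1 := hpt
    have hmul' : ∀ ⦃i j : ℕ⦄ (h : i ≤ j) (x y : X j),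
        S.bond h (x * y) = S.bond h x * S.bond h y := hmul
    -- the basepoint thread
    let e : L := ⟨fun i => pt i, fun i => S.bond_pt (Nat.le_succ i)⟩
    -- discreteness gives a neighborhood of e
    have hmem : ({e} : Set L) ∈ nhds e := (isOpen_discrete {e}).mem_nhds rfl
    rw [nhds_subtype_eq_comap, Filter.mem_comap] at hmem
    obtain ⟨U, hU, hUsub⟩ := hmem
    rw [nhds_pi, Filter.mem_pi] at hU
    obtain ⟨I, hIfin, t, ht, hIt⟩ := hU
    obtain ⟨N, hN⟩ := hIfin.bddAbove
    -- any thread agreeing with pt up to N is e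
    have key : ∀ g : L, (∀ i, i ≤ N → g.1 i = pt i) → g = e := by
      intro g hg
      apply hUsub
      apply hIt
      intro i hi
      have : g.1 i = pt i := hg i (hN hi)
      rw [this]
      exact mem_of_mem_nhds (ht i)
    -- bond is multiplicative and preserves inverses
    have hone : ∀ ⦃i j : ℕ⦄ (h : i ≤ j), S.bond h (1 : X j) = 1 := by
      intro i j h
      rw [← hpt' j, S.bond_pt h, hpt' i]
    have hinv : ∀ ⦃i j : ℕ⦄ (h : i ≤ j) (x : X j), S.bond h x⁻¹ = (S.bond h x)⁻¹ := by
      intro i j h x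
      have : S.bond h x⁻¹ * S.bond h x = 1 := by
        rw [← hmul' h, inv_mul_cancel, hone h]
      exact eq_inv_of_mul_eq_one_left this
    refine ⟨N, ?_⟩
    intro g h hgh
    simp only at hgh
    -- the difference thread
    let d : L := ⟨fun i => g.1 i * (h.1 i)⁻¹, by
      intro i
      show S.bond (Nat.le_succ i) (g.1 (i+1) * (h.1 (i+1))⁻¹) = g.1 i * (h.1 i)⁻¹
      rw [hmul' (Nat.le_succ i), hinv (Nat.le_succ i), g.2 i, h.2 i]⟩
    have hd : d = e := by
      apply key
      intro i hi
      have : g.1 i = h.1 i := by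
        rw [← coh g hi, ← coh h hi, hgh]
      show g.1 i * (h.1 i)⁻¹ = pt i
      rw [this, mul_inv_cancel, hpt' i]
    apply Subtype.ext
    funext i
    have : g.1 i * (h.1 i)⁻¹ = pt i := congrFun (congrArg Subtype.val hd) i
    rw [hpt' i] at this
    exact mul_inv_eq_one.mp this
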